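/- Suppose P* ∈ P, P0 log(p0/p*) < ∞, P0(p/p*) < ∞, and sup_{0<α<1} -log P0(p/p*)^α > 0 for a density p with P0(p > 0) = 1. Then P0 log(p0/p*) < P0 log(p0/p); i.e., p* has strictly smaller Kullback–Leibler divergence from P0 than p. -/

import Mathlib

open MeasureTheory Real

/-- If `P0 log(p0/p*) < ∞`, `P0(p/p*) < ∞`, `P0(p > 0) = 1` and
`sup_{0<α<1} -log P0 (p/p*)^α > 0`, then `p*` has strictly smaller Kullback–Leibler divergence
from `P0` than `p` (the divergence to `p` possibly being infinite). -/
theorem stmt14 {X : Type*} [MeasurableSpace X] (μ : Measure X) [SigmaFinite μ]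
    (p0 p pstar : X → ℝ) (hp0m : Measurable p0) (hpm : Measurable p)
    (hpsm : Measurable pstar)
    (hp0 : ∀ x, 0 ≤ p0 x) (hp : ∀ x, 0 ≤ p x) (hps : ∀ x, 0 ≤ pstar x)
    (hp01 : ∫ x, p0 x ∂μ = 1) (hp1 : ∫ x, p x ∂μ = 1) (hps1 : ∫ x, pstar x ∂μ = 1)
    (P0 : Measure X) (hP0 : P0 = μ.withDensity (fun x => ENNReal.ofReal (p0 x)))
    (hpspos : ∀ᵐ x ∂P0, 0 < pstar x)
    (hppos : ∀ᵐ x ∂P0, 0 < p x)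
    (hklfin : Integrable (fun x => Real.log (p0 x / pstar x)) P0)
    (hratio : Integrable (fun x => p x / pstar x) P0)
    (hsup : 0 < ⨆ α ∈ Set.Ioo (0 : ℝ) 1,
      -Real.log (∫ x, (p x / pstar x) ^ α ∂P0)) :
    (¬ Integrable (fun x => Real.log (p0 x / p x)) P0) ∨
      (∫ x, Real.log (p0 x / pstar x) ∂P0) < ∫ x, Real.log (p0 x / p x) ∂P0 := by
  -- P0 is a probability measure
  have hp0int : Integrable p0 μ := by
    by_contra h
    rw [integral_undef h] at hp01
    norm_num at hp01
  haveI : IsProbabilityMeasure P0 := by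
    constructor
    rw [hP0, withDensity_apply _ MeasurableSet.univ, Measure.restrict_univ,
      ← ofReal_integral_eq_lintegral_ofReal hp0int (Filter.Eventually.of_forall hp0), hp01]
    simp
  -- a.e. positivity of p0 under P0
  have hp0pos : ∀ᵐ x ∂P0, 0 < p0 x := by
    rw [hP0, ae_withDensity_iff (by measurability)]
    filter_upwards with x hx
    rcases lt_or_eq_of_le (hp0 x) with h | h
    · exact h
    · exact absurd (by simp [← h]) hx
  -- extract α with log (∫ F^α) < 0
  obtain ⟨α, hα01, hgneg⟩ :
      ∃ α ∈ Set.Ioo (0 : ℝ) 1, Real.log (∫ x, (p x / pstar x) ^ α ∂P0) < 0 := by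
    by_contra h
    push_neg at h
    have : (⨆ α ∈ Set.Ioo (0 : ℝ) 1,
        -Real.log (∫ x, (p x / pstar x) ^ α ∂P0)) ≤ 0 := by
      refine Real.iSup_le (fun α => Real.iSup_le (fun hα => ?_) le_rfl) le_rfl
      linarith [h α hα]
    linarith
  set F : X → ℝ := fun x => p x / pstar x with hF
  have hFnn : ∀ x, 0 ≤ F x := fun x => div_nonneg (hp x) (hps x)
  have hFm : Measurable fun x => F x ^ α :=
    (Real.continuous_rpow_const hα01.1.le).measurable.comp (hpm.div hpsm)
  -- integrability of F^α
  have hFα : Integrable (fun x => F x ^ α) P0 := by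
    refine Integrable.mono' ((integrable_const (1:ℝ)).add hratio)
      hFm.aestronglyMeasurable ?_
    filter_upwards with x
    rw [Real.norm_of_nonneg (Real.rpow_nonneg (hFnn x) α)]
    rcases le_total (F x) 1 with h | h
    · have h1 : F x ^ α ≤ 1 := Real.rpow_le_one (hFnn x) h hα01.1.le
      have h2 := hFnn x
      calc F x ^ α ≤ 1 := h1
        _ ≤ 1 + F x := by linarith
    · calc F x ^ α ≤ F x ^ (1:ℝ) :=
            Real.rpow_le_rpow_of_exponent_le h hα01.2.le
        _ = F x := Real.rpow_one _
        _ ≤ 1 + F x := by linarith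
  have hg1 : (∫ x, F x ^ α ∂P0) < 1 := by
    by_contra h
    push_neg at h
    exact absurd (Real.log_nonneg h) (not_le.2 hgneg)
  by_cases hint : Integrable (fun x => Real.log (p0 x / p x)) P0
  swap
  · exact Or.inl hint
  right
  -- log F is integrable
  have haeF : ∀ᵐ x ∂P0, Real.log (F x) = Real.log (p0 x / pstar x) - Real.log (p0 x / p x) := by
    filter_upwards [hp0pos, hppos, hpspos] with x h0 h1 h2
    rw [← Real.log_div (by positivity) (by positivity)]
    congr 1
    simp only [hF]
    field_simp
  have hlogF : Integrable (fun x => Real.log (F x)) P0 :=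
    (hklfin.sub hint).congr (haeF.mono fun x hx => hx.symm)
  -- pointwise inequality a.e.: α * log F ≤ F^α - 1
  have hptw : ∀ᵐ x ∂P0, α * Real.log (F x) ≤ F x ^ α - 1 := by
    filter_upwards [hppos, hpspos] with x h1 h2
    have hFpos : 0 < F x := div_pos h1 h2
    rw [Real.rpow_def_of_pos hFpos, mul_comm α]
    linarith [Real.add_one_le_exp (Real.log (F x) * α)]
  have hI1 : Integrable (fun x => α * Real.log (F x)) P0 := hlogF.const_mul α
  have hI2 : Integrable (fun x => F x ^ α - 1) P0 := hFα.sub (integrable_const 1)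
  have hineq : α * ∫ x, Real.log (F x) ∂P0 ≤ (∫ x, F x ^ α ∂P0) - 1 := by
    have h := integral_mono_ae hI1 hI2 hptw
    rw [integral_const_mul] at h
    rwa [integral_sub hFα (integrable_const 1), integral_const, probReal_univ,
      smul_eq_mul, one_mul] at h
  have hlogFneg : (∫ x, Real.log (F x) ∂P0) < 0 := by
    nlinarith [hα01.1]
  -- conclude
  have hsplit : (∫ x, Real.log (p0 x / pstar x) ∂P0)
      = (∫ x, Real.log (p0 x / p x) ∂P0) + ∫ x, Real.log (F x) ∂P0 := by
    rw [← integral_add hint hlogF]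
    refine integral_congr_ae ?_
    filter_upwards [haeF] with x hx
    rw [hx]; ring
  linarith
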